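/- The set E := {(0,0,0)} ∪ ({(x,y,z) : x = 1} \ {(1, s, 0) : |s| < 1}) ⊆ ℍ does not have the full cone property: for every open cone C with −C = C and C ∩ {(x,y,z) : z = 0} ≠ ∅, there exists p ∈ E with C ∩ p⁻¹E ≠ ∅. -/

import Mathlib

open Set

noncomputable section

/-- The first Heisenberg group as ℝ³. -/
abbrev H : Type := ℝ × ℝ × ℝ

/-- Heisenberg group multiplication. -/
def Hmul (p q : H) : H :=
  (p.1 + q.1, p.2.1 + q.2.1, p.2.2 + q.2.2 + (p.1 * q.2.1 - q.1 * p.2.1) / 2)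

/-- Heisenberg group inverse. -/
def Hinv (p : H) : H := (-p.1, -p.2.1, -p.2.2)

/-- Left translation of a set: `pE = {pe : e ∈ E}`. -/
def LTrans (p : H) (E : Set H) : Set H := Hmul p '' E

/-- The α-flat cone `fC(α) = {(x,y,0) : |y| < α|x|}`. -/
def fC (α : ℝ) : Set H := {p | |p.2.1| < α * |p.1| ∧ p.2.2 = 0}

/-- The α-full cone `C(α) = {(x,y,z) : |y| < α|x|, |z| < αx²/2}`. -/
def fullC (α : ℝ) : Set H := {p | |p.2.1| < α * |p.1| ∧ |p.2.2| < α * p.1 ^ 2 / 2}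

/-- The truncated full cone `C(β,r)`. -/
def truncC (β r : ℝ) : Set H :=
  {p | |p.2.1| < β * |p.1| ∧ |p.2.2| < β * p.1 ^ 2 / 2 ∧ |p.1| < r}

/-- The vertical set `vC(β,r) = {(x,0,ux²/2) : |u| < β, |x| < r}`. -/
def vC (β r : ℝ) : Set H :=
  {p | ∃ u x : ℝ, |u| < β ∧ |x| < r ∧ p = (x, 0, u * x ^ 2 / 2)}

/-- The shear map `M_t(x,y,z) = (x, y + tx, z)`. -/
def Mmap (t : ℝ) (p : H) : H := (p.1, p.2.1 + t * p.1, p.2.2)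

/-- The projection `π(x,y,z) = (y, z + xy/2)`. -/
def proj (p : H) : ℝ × ℝ := (p.2.1, p.2.2 + p.1 * p.2.1 / 2)

/-- The intrinsic graph of `φ` over `Ω`. -/
def IGraph (Ω : Set (ℝ × ℝ)) (φ : ℝ × ℝ → ℝ) : Set H :=
  (fun w => (φ w, w.1, w.2 - w.1 * φ w / 2)) '' Ω

/-- The α-flat cone property. -/
def FlatConeProp (α : ℝ) (S : Set H) : Prop :=
  ∀ p ∈ S, fC α ∩ LTrans (Hinv p) S = ∅

/-- A topological surface: every point of `S` has an open neighborhood in `S`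
homeomorphic to `ℝ²`. -/
def IsTopSurface (S : Set H) : Prop :=
  ∀ p : S, ∃ U : Set S, IsOpen U ∧ p ∈ U ∧ Nonempty (U ≃ₜ (ℝ × ℝ))

/-- Dilations `δ_λ(x,y,z) = (λx, λy, λ²z)`. -/
def dil (l : ℝ) (p : H) : H := (l * p.1, l * p.2.1, l ^ 2 * p.2.2)

/-- A cone is a set invariant under all dilations. -/
def IsCone (E : Set H) : Prop := ∀ l : ℝ, 0 < l → dil l '' E = E

/-- Rotation around the z-axis by angle θ. -/
def Rot (θ : ℝ) (p : H) : H :=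
  (p.1 * Real.cos θ - p.2.1 * Real.sin θ, p.1 * Real.sin θ + p.2.1 * Real.cos θ, p.2.2)

theorem stmt16 :
    ∀ C : Set H, IsOpen C → IsCone C → (∀ p : H, p ∈ C ↔ -p ∈ C) →
      (C ∩ {p : H | p.2.2 = 0}).Nonempty →
      ∃ p ∈ ({((0:ℝ), (0:ℝ), (0:ℝ))} ∪
          ({q : H | q.1 = 1} \ {q : H | ∃ s : ℝ, |s| < 1 ∧ q = (1, s, 0)})),
        (C ∩ LTrans (Hinv p)
          ({((0:ℝ), (0:ℝ), (0:ℝ))} ∪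
            ({q : H | q.1 = 1} \ {q : H | ∃ s : ℝ, |s| < 1 ∧ q = (1, s, 0)}))).Nonempty := by
  intro C hopen hcone hsym ⟨c0, hc0C, hc0z⟩
  -- WLOG first coordinate nonneg
  set c : H := if 0 ≤ c0.1 then c0 else -c0 with hc
  have hcC : c ∈ C := by
    by_cases h : 0 ≤ c0.1
    · simpa [hc, h] using hc0C
    · simpa [hc, h] using (hsym c0).mp hc0C
  have hc1 : 0 ≤ c.1 := by
    by_cases h : 0 ≤ c0.1
    · simpa [hc, h]
    · simp only [hc, if_neg h]
      push_neg at h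
      simpa using h.le
  -- find t > 0 with (c.1 + t, c.2.1, t) ∈ C
  have hf : Continuous (fun t : ℝ => ((c.1 + t, c.2.1, t) : H)) := by fun_prop
  have hcz : c.2.2 = 0 := by
    have hz : c0.2.2 = 0 := hc0z
    by_cases h : 0 ≤ c0.1 <;> simp [hc, h, hz]
  have h0 : (0:ℝ) ∈ (fun t : ℝ => ((c.1 + t, c.2.1, t) : H)) ⁻¹' C := by
    simp only [Set.mem_preimage, add_zero]
    have : ((c.1, c.2.1, (0:ℝ)) : H) = c := by
      rw [← hcz]
    rw [this]; exact hcC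
  obtain ⟨ε, hε, hball⟩ := Metric.isOpen_iff.mp (hopen.preimage hf) 0 h0
  set t : ℝ := ε / 2 with ht
  have htpos : 0 < t := by positivity
  have htmem : ((c.1 + t, c.2.1, t) : H) ∈ C := by
    apply hball
    simp [Real.dist_eq, ht, abs_of_pos, hε, abs_of_nonneg (le_of_lt (by positivity : (0:ℝ) < ε/2))]
  set x : ℝ := c.1 + t with hx
  have hxpos : 0 < x := by positivity
  set q : H := (1, c.2.1 / x, t / x ^ 2) with hq
  have hxne : x ≠ 0 := ne_of_gt hxpos
  have hqC : q ∈ C := by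
    have := hcone (1 / x) (by positivity)
    rw [← this]
    refine ⟨(x, c.2.1, t), htmem, ?_⟩
    simp only [dil, hq, Prod.mk.injEq]
    refine ⟨by field_simp, by ring, by field_simp⟩
  have hqE : q ∈ ({((0:ℝ), (0:ℝ), (0:ℝ))} ∪
      ({p : H | p.1 = 1} \ {p : H | ∃ s : ℝ, |s| < 1 ∧ p = (1, s, 0)})) := by
    right
    refine ⟨rfl, ?_⟩
    rintro ⟨s, hs, heq⟩
    have : t / x ^ 2 = 0 := by
      have := congrArg (fun p : H => p.2.2) heq
      simpa [hq] using this
    have : t = 0 := by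
      field_simp at this; simpa using this
    linarith
  refine ⟨((0:ℝ), (0:ℝ), (0:ℝ)), Or.inl rfl, q, hqC, q, hqE, ?_⟩
  simp [Hmul, Hinv]
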